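/- Let λ : (0,∞) → ℝ be continuous with λ(ρ) ≥ α > 0 for all ρ ∈ [r,∞) and 1/(ρ·λ(ρ)) = O(ρ^{-2k-1}) as ρ → ∞ for some integer k ≥ 1. Fix c > 0 and r > 0. Let h : [0,T') → (0,∞) be the maximal solution of h'(t)/h(t) = c·λ(h(t)·r), h(0) = 1. Then h is strictly increasing, T' < ∞, h(t) → ∞ as t → T', and there is C > 0 with h(t)^{2k} ≤ C/(T'-t) near T'. Moreover T' = (1/c)·∫_r^∞ dρ/(ρ·λ(ρ)). -/

import Mathlib

open Filter Asymptotics MeasureTheory Set Topology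

noncomputable def stmt15inv (F : ℝ → ℝ) (s : ℝ) : ℝ :=
  @dite _ (∃ x, F x = s) (Classical.propDecidable _) (fun h => h.choose) (fun _ => 0)

lemma stmt15inv_spec {F : ℝ → ℝ} {s : ℝ} (hs : ∃ x, F x = s) : F (stmt15inv F s) = s := by
  rw [stmt15inv, dif_pos hs]; exact hs.choose_spec

lemma stmt15_surj {F : ℝ → ℝ} (hFc : Continuous F) {u v s : ℝ} (huv : u ≤ v)
    (h1 : F u ≤ s) (h2 : s ≤ F v) : ∃ x, F x = s := by
  obtain ⟨x, -, hx⟩ := intermediate_value_Icc huv hFc.continuousOn ⟨h1, h2⟩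
  exact ⟨x, hx⟩

lemma stmt15inv_eventually {F : ℝ → ℝ} (hFm : StrictMono F) (hFc : Continuous F)
    {s₀ : ℝ} (hs₀ : ∃ x, F x = s₀) :
    ∀ᶠ s in nhds s₀, F (stmt15inv F s) = s := by
  set x₀ := stmt15inv F s₀ with hx₀
  have hFx₀ : F x₀ = s₀ := stmt15inv_spec hs₀
  have : Ioo (F (x₀ - 1)) (F (x₀ + 1)) ∈ nhds s₀ := by
    apply Ioo_mem_nhds <;> rw [← hFx₀] <;> exact hFm (by linarith)
  filter_upwards [this] with s hs
  exact stmt15inv_spec (stmt15_surj hFc (by linarith) hs.1.le hs.2.le)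

lemma stmt15inv_continuousAt {F : ℝ → ℝ} (hFm : StrictMono F) (hFc : Continuous F)
    {s₀ : ℝ} (hs₀ : ∃ x, F x = s₀) : ContinuousAt (stmt15inv F) s₀ := by
  set x₀ := stmt15inv F s₀ with hx₀
  have hFx₀ : F x₀ = s₀ := stmt15inv_spec hs₀
  rw [Metric.continuousAt_iff]
  intro ε hε
  have h1 : F (x₀ - ε) < s₀ := by rw [← hFx₀]; exact hFm (by linarith)
  have h2 : s₀ < F (x₀ + ε) := by rw [← hFx₀]; exact hFm (by linarith)
  refine ⟨min (s₀ - F (x₀ - ε)) (F (x₀ + ε) - s₀), lt_min (by linarith) (by linarith),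
    fun s hds => ?_⟩
  rw [Real.dist_eq] at hds
  obtain ⟨hd1, hd2⟩ := abs_lt.1 hds
  have m1 := min_le_left (s₀ - F (x₀ - ε)) (F (x₀ + ε) - s₀)
  have m2 := min_le_right (s₀ - F (x₀ - ε)) (F (x₀ + ε) - s₀)
  have hlt1 : F (x₀ - ε) < s := by linarith
  have hlt2 : s < F (x₀ + ε) := by linarith
  have hFs : F (stmt15inv F s) = s := stmt15inv_spec (stmt15_surj hFc (by linarith) hlt1.le hlt2.le)
  have l1 : x₀ - ε < stmt15inv F s := by
    by_contra hcon
    have := hFm.le_iff_le.2 (not_lt.1 hcon)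
    rw [hFs] at this; linarith
  have l2 : stmt15inv F s < x₀ + ε := by
    by_contra hcon
    have := hFm.le_iff_le.2 (not_lt.1 hcon)
    rw [hFs] at this; linarith
  rw [Real.dist_eq, ← hx₀, abs_lt]; constructor <;> linarith

lemma stmt15inv_hasDerivAt {F : ℝ → ℝ} (hFm : StrictMono F) (hFc : Continuous F)
    {s₀ d : ℝ} (hs₀ : ∃ x, F x = s₀) (hd : HasDerivAt F d (stmt15inv F s₀)) (hd0 : d ≠ 0) :
    HasDerivAt (stmt15inv F) d⁻¹ s₀ :=
  HasDerivAt.of_local_left_inverse (stmt15inv_continuousAt hFm hFc hs₀) hd hd0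
    (stmt15inv_eventually hFm hFc hs₀)

theorem stmt15 (lam : ℝ → ℝ) (hcont : ContinuousOn lam (Set.Ioi 0))
    (k : ℕ) (hk : 1 ≤ k) (α : ℝ) (hα : 0 < α)
    (c r : ℝ) (hc : 0 < c) (hr : 0 < r)
    (hbound : ∀ ρ, r ≤ ρ → α ≤ lam ρ)
    (hO : (fun ρ => 1 / (ρ * lam ρ)) =O[atTop] fun ρ => (ρ ^ (2 * k + 1))⁻¹)
    (T' : ℝ) (hT'0 : 0 < T')
    (h : ℝ → ℝ) (hh0 : h 0 = 1)
    (hpos : ∀ t ∈ Set.Ico (0 : ℝ) T', 0 < h t)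
    (hode : ∀ t ∈ Set.Ico (0 : ℝ) T', HasDerivAt h (c * lam (h t * r) * h t) t)
    (hmax : ∀ (S : ℝ → ℝ) (T₂ : ℝ), T' < T₂ → S 0 = 1 →
      (∀ t ∈ Set.Ico (0 : ℝ) T₂, 0 < S t ∧
        HasDerivAt S (c * lam (S t * r) * S t) t) → False) :
    StrictMonoOn h (Set.Ico 0 T')
    ∧ (¬ ∃ S : ℝ → ℝ, S 0 = 1 ∧ ∀ t ∈ Set.Ici (0 : ℝ), 0 < S t ∧
        HasDerivAt S (c * lam (S t * r) * S t) t)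
    ∧ Tendsto h (nhdsWithin T' (Set.Iio T')) atTop
    ∧ (∃ C > (0 : ℝ), ∃ t₀ ∈ Set.Ico (0 : ℝ) T',
        ∀ t ∈ Set.Ico t₀ T', (h t) ^ (2 * k) ≤ C / (T' - t))
    ∧ T' = (1 / c) * ∫ ρ in Set.Ioi r, 1 / (ρ * lam ρ) := by
  classical
  -- ## Setup
  have hlamCA : ∀ x : ℝ, 0 < x → ContinuousAt lam x := fun x hx =>
    hcont.continuousAt (Ioi_mem_nhds hx)
  set φt : ℝ → ℝ := fun ρ => 1 / (max ρ r * lam (max ρ r)) with hφt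
  have hmaxpos : ∀ ρ : ℝ, (0:ℝ) < max ρ r := fun ρ => lt_of_lt_of_le hr (le_max_right _ _)
  have hlamax : ∀ ρ : ℝ, α ≤ lam (max ρ r) := fun ρ => hbound _ (le_max_right _ _)
  have hφtpos : ∀ ρ, 0 < φt ρ := fun ρ =>
    div_pos one_pos (mul_pos (hmaxpos ρ) (lt_of_lt_of_le hα (hlamax ρ)))
  have hφtc : Continuous φt := by
    have hm : Continuous fun ρ : ℝ => max ρ r := continuous_id.max continuous_const
    have hl : Continuous fun ρ : ℝ => lam (max ρ r) :=
      continuous_iff_continuousAt.2 fun ρ =>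
        ContinuousAt.comp (g := lam) (f := fun ρ : ℝ => max ρ r) (x := ρ)
          (hlamCA _ (hmaxpos ρ)) hm.continuousAt
    exact continuous_const.div (hm.mul hl)
      (fun ρ => ne_of_gt (mul_pos (hmaxpos ρ) (lt_of_lt_of_le hα (hlamax ρ))))
  have hφeq : ∀ ρ : ℝ, r ≤ ρ → φt ρ = 1 / (ρ * lam ρ) := fun ρ hρ => by
    rw [hφt]; simp only [max_eq_left hρ]
  set F : ℝ → ℝ := fun x => ∫ s in (r)..x, φt s with hF
  have hFderiv : ∀ x : ℝ, HasDerivAt F (φt x) x := fun x =>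
    (hφtc.integral_hasStrictDerivAt r x).hasDerivAt
  have hFd : Differentiable ℝ F := fun x => (hFderiv x).differentiableAt
  have hFc : Continuous F := hFd.continuous
  have hFm : StrictMono F := strictMono_of_deriv_pos fun x => by
    rw [(hFderiv x).deriv]; exact hφtpos x
  have hFr : F r = 0 := intervalIntegral.integral_same
  -- ## Integrability of φt on `Ioi r`
  rw [isBigO_iff] at hO
  obtain ⟨C₀, hC₀⟩ := hO
  rw [eventually_atTop] at hC₀
  obtain ⟨M, hM⟩ := hC₀
  set M' : ℝ := max M (max r 1) with hM'
  have hM'r : r ≤ M' := le_trans (le_max_left r 1) (le_max_right _ _)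
  have hM'1 : (1:ℝ) ≤ M' := le_trans (le_max_right r 1) (le_max_right _ _)
  have hM'pos : (0:ℝ) < M' := lt_of_lt_of_le one_pos hM'1
  have hbnd : ∀ ρ : ℝ, M' ≤ ρ → φt ρ ≤ C₀ * (ρ ^ (2 * k + 1))⁻¹ := by
    intro ρ hρ
    have hρ1 : (1:ℝ) ≤ ρ := le_trans hM'1 hρ
    have hρr : r ≤ ρ := le_trans hM'r hρ
    have hρpos : (0:ℝ) < ρ := lt_of_lt_of_le one_pos hρ1
    have h1 := hM ρ (le_trans (le_max_left _ _) hρ)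
    rw [Real.norm_eq_abs, Real.norm_eq_abs, abs_of_pos (by positivity : (0:ℝ) < (ρ ^ (2*k+1))⁻¹)]
      at h1
    calc φt ρ = 1 / (ρ * lam ρ) := hφeq ρ hρr
    _ ≤ |1 / (ρ * lam ρ)| := le_abs_self _
    _ ≤ C₀ * (ρ ^ (2 * k + 1))⁻¹ := h1
  have hC₀pos : 0 < C₀ := by
    have h0 := hbnd M' le_rfl
    have h1 := hφtpos M'
    nlinarith [inv_pos.2 (pow_pos hM'pos (2*k+1))]
  have hk1 : (1:ℝ) ≤ (k:ℝ) := by exact_mod_cast hk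
  have hpow_eq : ∀ x ∈ Ioi M', x ^ (-(2*(k:ℝ)+1)) = (x ^ (2 * k + 1))⁻¹ := by
    intro x hx
    have hx0 : (0:ℝ) < x := lt_trans hM'pos hx
    rw [← Real.rpow_natCast x (2*k+1), ← Real.rpow_neg hx0.le]
    congr 1
    push_cast
    ring
  have hrpow_int : IntegrableOn (fun ρ : ℝ => C₀ * (ρ ^ (2 * k + 1))⁻¹) (Ioi M') := by
    have h0 : IntegrableOn (fun x : ℝ => x ^ (-(2*(k:ℝ)+1))) (Ioi M') :=
      integrableOn_Ioi_rpow_of_lt (by linarith) hM'pos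
    exact (h0.congr_fun hpow_eq measurableSet_Ioi).const_mul C₀
  have hφtIoiM' : IntegrableOn φt (Ioi M') := by
    refine Integrable.mono' hrpow_int hφtc.aestronglyMeasurable.restrict ?_
    rw [ae_restrict_iff' measurableSet_Ioi]
    filter_upwards with ρ hρ
    rw [Real.norm_eq_abs, abs_of_pos (hφtpos ρ)]
    exact hbnd ρ hρ.le
  have hφtIoi : IntegrableOn φt (Ioi r) := by
    rw [← Ioc_union_Ioi_eq_Ioi hM'r]
    exact (hφtc.integrableOn_Ioc).union hφtIoiM'
  set I : ℝ := ∫ ρ in Ioi r, φt ρ with hI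
  have hIeq : (∫ ρ in Ioi r, 1 / (ρ * lam ρ)) = I :=
    setIntegral_congr_fun measurableSet_Ioi fun ρ hρ => (hφeq ρ (le_of_lt hρ)).symm
  have hFtend : Tendsto F atTop (𝓝 I) :=
    intervalIntegral_tendsto_integral_Ioi r hφtIoi tendsto_id
  have hFlt : ∀ x, F x < I := by
    intro x
    have h1 : F x < F (x + 1) := hFm (lt_add_one x)
    have h2 : F (x + 1) ≤ I :=
      ge_of_tendsto hFtend (eventually_atTop.2 ⟨x + 1, fun y hy => hFm.monotone hy⟩)
    linarith
  have hI0 : 0 < I := by have := hFlt r; rwa [hFr] at this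
  -- ## Step A : `h ≥ 1` on `[0, T')`
  have hcontAt : ∀ t ∈ Ico (0:ℝ) T', ContinuousAt h t := fun t ht => (hode t ht).continuousAt
  have hge1 : ∀ t ∈ Ico (0:ℝ) T', 1 ≤ h t := by
    by_contra hcon
    push_neg at hcon
    obtain ⟨t₁, ht₁, ht₁lt⟩ := hcon
    have ht₁pos : 0 < t₁ := by
      rcases lt_or_eq_of_le ht₁.1 with h1 | h1
      · exact h1
      · rw [← h1, hh0] at ht₁lt; exact absurd ht₁lt (lt_irrefl _)
    have hsub : Icc (0:ℝ) t₁ ⊆ Ico (0:ℝ) T' := fun s hs => ⟨hs.1, lt_of_le_of_lt hs.2 ht₁.2⟩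
    have hconth : ContinuousOn h (Icc 0 t₁) := fun s hs =>
      (hcontAt s (hsub hs)).continuousWithinAt
    set A : Set ℝ := Icc (0:ℝ) t₁ ∩ h ⁻¹' Ici 1 with hA
    have hAclosed : IsClosed A := hconth.preimage_isClosed_of_isClosed isClosed_Icc isClosed_Ici
    have hA0 : (0:ℝ) ∈ A := ⟨⟨le_rfl, ht₁pos.le⟩, by simp [mem_preimage, hh0]⟩
    have hAne : A.Nonempty := ⟨0, hA0⟩
    have hAbdd : BddAbove A := by
      refine ⟨t₁, fun s hs => ?_⟩
      exact hs.1.2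
    set t₀ : ℝ := sSup A with ht₀
    have ht₀A : t₀ ∈ A := hAclosed.csSup_mem hAne hAbdd
    have ht₀le : t₀ ≤ t₁ := ht₀A.1.2
    have ht₀lt : t₀ < t₁ := by
      rcases lt_or_eq_of_le ht₀le with h1 | h1
      · exact h1
      · exfalso; have := ht₀A.2; rw [mem_preimage, h1] at this; exact absurd ht₁lt (not_lt.2 this)
    have ht₀Ico : t₀ ∈ Ico (0:ℝ) T' := hsub ⟨ht₀A.1.1, ht₀le⟩
    have hht₀1 : h t₀ = 1 := by
      by_contra hne
      have hgt : 1 < h t₀ := lt_of_le_of_ne ht₀A.2 (Ne.symm hne)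
      have hev : ∀ᶠ s in 𝓝 t₀, 1 < h s :=
        (hcontAt t₀ ht₀Ico).eventually (eventually_gt_nhds hgt)
      have hev' : ∀ᶠ s in 𝓝[>] t₀, 1 < h s := hev.filter_mono nhdsWithin_le_nhds
      have hev2 : Ioc t₀ t₁ ∈ 𝓝[>] t₀ := Ioc_mem_nhdsGT_of_mem ⟨le_rfl, ht₀lt⟩
      obtain ⟨s, hs1, hs2⟩ := (hev'.and (eventually_of_mem hev2 fun s hs => hs)).exists
      have : s ∈ A := ⟨⟨le_trans ht₀A.1.1 hs2.1.le, hs2.2⟩, le_of_lt hs1⟩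
      exact absurd (le_csSup hAbdd this) (not_le.2 hs2.1)
    -- derivative at t₀ is positive
    have hd : HasDerivAt h (c * lam r) t₀ := by
      have := hode t₀ ht₀Ico
      rwa [hht₀1, one_mul, mul_one] at this
    have hdpos : 0 < c * lam r := by
      have h1 := hbound r le_rfl
      have : 0 < lam r := lt_of_lt_of_le hα h1
      positivity
    have hslope : Tendsto (slope h t₀) (𝓝[≠] t₀) (𝓝 (c * lam r)) :=
      hasDerivAt_iff_tendsto_slope.1 hd
    have hev : ∀ᶠ s in 𝓝[>] t₀, 0 < slope h t₀ s := by
      have : ∀ᶠ s in 𝓝[≠] t₀, 0 < slope h t₀ s :=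
        hslope.eventually (eventually_gt_nhds hdpos)
      exact this.filter_mono (nhdsWithin_mono _ fun s hs => ne_of_gt hs)
    have hev2 : Ioc t₀ t₁ ∈ 𝓝[>] t₀ := Ioc_mem_nhdsGT_of_mem ⟨le_rfl, ht₀lt⟩
    obtain ⟨s, hs1, hs2⟩ := (hev.and (eventually_of_mem hev2 fun s hs => hs)).exists
    have hs3 : 1 < h s := by
      have h1 : 0 < (h s - h t₀) / (s - t₀) := by rwa [slope_def_field] at hs1
      have hst : 0 < s - t₀ := sub_pos.2 hs2.1
      have h2 : 0 < h s - h t₀ := by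
        rcases div_pos_iff.1 h1 with ⟨h3, -⟩ | ⟨-, h4⟩
        · exact h3
        · linarith
      rw [hht₀1] at h2; linarith
    have : s ∈ A := ⟨⟨le_trans ht₀A.1.1 hs2.1.le, hs2.2⟩, le_of_lt hs3⟩
    exact absurd (le_csSup hAbdd this) (not_le.2 hs2.1)
  -- ## Key identity : `F (h t * r) = c * t`
  have hhr : ∀ t ∈ Ico (0:ℝ) T', r ≤ h t * r := fun t ht =>
    le_mul_of_one_le_left hr.le (hge1 t ht)
  have hgd : ∀ s ∈ Ico (0:ℝ) T',
      HasDerivAt (fun u => F (h u * r) - c * u) 0 s := by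
    intro s hs
    have hs1 : 1 ≤ h s := hge1 s hs
    have hsr : r ≤ h s * r := hhr s hs
    have hlam : 0 < lam (h s * r) := lt_of_lt_of_le hα (hbound _ hsr)
    have hd1 : HasDerivAt (fun u => h u * r) (c * lam (h s * r) * h s * r) s :=
      (hode s hs).mul_const r
    have hd2 : HasDerivAt F (φt (h s * r)) (h s * r) := hFderiv _
    have hcomp : HasDerivAt (fun u => F (h u * r))
        (φt (h s * r) * (c * lam (h s * r) * h s * r)) s := by have := hd2.comp s hd1; exact this
    have hval : φt (h s * r) * (c * lam (h s * r) * h s * r) = c := by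
      rw [hφeq _ hsr]
      have h1 : h s ≠ 0 := by positivity
      have h2 : lam (h s * r) ≠ 0 := ne_of_gt hlam
      field_simp
    rw [hval] at hcomp
    have hd3 : HasDerivAt (fun u : ℝ => c * u) c s := by
      simpa using (hasDerivAt_id s).const_mul c
    have := hcomp.sub hd3; rw [sub_self] at this; exact this
  have hkey : ∀ t ∈ Ico (0:ℝ) T', F (h t * r) = c * t := by
    intro t ht
    have hsub : Icc (0:ℝ) t ⊆ Ico (0:ℝ) T' := fun s hs => ⟨hs.1, lt_of_le_of_lt hs.2 ht.2⟩
    have hcg : ContinuousOn (fun u => F (h u * r) - c * u) (Icc 0 t) := fun s hs =>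
      ((hgd s (hsub hs)).continuousAt).continuousWithinAt
    have := constant_of_has_deriv_right_zero hcg
      (fun s hs => ((hgd s (hsub (Ico_subset_Icc_self hs))).hasDerivWithinAt)) t
      (right_mem_Icc.2 ht.1)
    rw [hh0, one_mul, hFr] at this
    have h0 : F (h t * r) - c * t = 0 := by simpa using this
    linarith
  -- ## Conjunct 1 : strict monotonicity
  have hmono : StrictMonoOn h (Ico 0 T') := by
    intro a ha b hb hab
    have h1 : F (h a * r) < F (h b * r) := by
      rw [hkey a ha, hkey b hb]
      exact (mul_lt_mul_iff_right₀ hc).2 hab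
    have h2 : h a * r < h b * r := hFm.lt_iff_lt.1 h1
    exact (mul_lt_mul_iff_left₀ hr).1 h2
  -- ## `T' ≤ I / c`
  have hT'le : T' ≤ I / c := by
    by_contra hcon
    push_neg at hcon
    have hmem : I / c ∈ Ico (0:ℝ) T' := ⟨le_of_lt (div_pos hI0 hc), hcon⟩
    have := hkey _ hmem
    rw [mul_div_cancel₀ _ (ne_of_gt hc)] at this
    exact absurd (this ▸ hFlt (h (I / c) * r)) (lt_irrefl _)
  -- ## `T' = I / c` via maximality
  have hrange : ∀ s : ℝ, 0 ≤ s → s < I → ∃ x, F x = s := by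
    intro s h0 h1
    obtain ⟨v, hv⟩ : ∃ v, s < F v :=
      (hFtend.eventually (eventually_gt_nhds h1)).exists
    have hrv : r ≤ v := by
      have : F r < F v := by rw [hFr]; linarith
      exact (hFm.lt_iff_lt.1 this).le
    exact stmt15_surj hFc hrv (by rw [hFr]; exact h0) hv.le
  have hT'eq : T' = I / c := by
    rcases eq_or_lt_of_le hT'le with heq | hlt
    · exact heq
    exfalso
    set S : ℝ → ℝ := fun t => stmt15inv F (c * t) / r with hS
    have hS0 : S 0 = 1 := by
      have hex0 : ∃ x, F x = 0 := ⟨r, hFr⟩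
      have : stmt15inv F 0 = r := hFm.injective (by rw [stmt15inv_spec hex0, hFr])
      rw [hS]
      simp only [mul_zero, this]
      exact div_self (ne_of_gt hr)
    refine hmax S (I / c) hlt hS0 fun t ht => ?_
    have hs0 : 0 ≤ c * t := mul_nonneg hc.le ht.1
    have hs1 : c * t < I := by
      have := (lt_div_iff₀ hc).1 ht.2
      linarith [this]
    have hex : ∃ x, F x = c * t := hrange _ hs0 hs1
    set x₀ := stmt15inv F (c * t) with hx₀
    have hFx₀ : F x₀ = c * t := stmt15inv_spec hex
    have hx₀r : r ≤ x₀ := by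
      have : F r ≤ F x₀ := by rw [hFr, hFx₀]; exact hs0
      exact hFm.le_iff_le.1 this
    have hx₀pos : 0 < x₀ := lt_of_lt_of_le hr hx₀r
    have hlamx₀ : 0 < lam x₀ := lt_of_lt_of_le hα (hbound _ hx₀r)
    constructor
    · exact div_pos hx₀pos hr
    have hdF : HasDerivAt F (φt x₀) x₀ := hFderiv x₀
    have hψ : HasDerivAt (stmt15inv F) (φt x₀)⁻¹ (c * t) :=
      stmt15inv_hasDerivAt hFm hFc hex hdF (ne_of_gt (hφtpos _))
    have hmul : HasDerivAt (fun u : ℝ => c * u) c t := by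
      simpa using (hasDerivAt_id t).const_mul c
    have hcomp : HasDerivAt (fun u => stmt15inv F (c * u)) ((φt x₀)⁻¹ * c) t :=
      HasDerivAt.comp t hψ hmul
    have hSd : HasDerivAt S ((φt x₀)⁻¹ * c / r) t := hcomp.div_const r
    have hval : (φt x₀)⁻¹ * c / r = c * lam (S t * r) * S t := by
      have hSt : S t * r = x₀ := by
        rw [hS]; exact div_mul_cancel₀ _ (ne_of_gt hr)
      rw [hSt, hφeq _ hx₀r, hS]
      rw [one_div, inv_inv]
      field_simp
      ring
    rwa [hval] at hSd
  -- ## Conjunct 3 : blow-up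
  have htend : Tendsto h (nhdsWithin T' (Iio T')) atTop := by
    refine tendsto_atTop.2 fun K => ?_
    set v : ℝ := (|K| + 1) * r with hv
    have hFvI : F v < I := hFlt v
    have ha1 : F v / c < T' := by
      rw [hT'eq]; gcongr
    have hmem : Ioo (max 0 (F v / c)) T' ∈ nhdsWithin T' (Iio T') :=
      Ioo_mem_nhdsLT (max_lt hT'0 ha1)
    filter_upwards [hmem] with t htm
    have ht0 : 0 ≤ t := le_of_lt (lt_of_le_of_lt (le_max_left _ _) htm.1)
    have htIco : t ∈ Ico (0:ℝ) T' := ⟨ht0, htm.2⟩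
    have hFv : F v < c * t := by
      have := lt_of_le_of_lt (le_max_right 0 (F v / c)) htm.1
      calc F v = c * (F v / c) := by field_simp
      _ < c * t := (mul_lt_mul_iff_right₀ hc).2 this
    have h1 : F v < F (h t * r) := by rw [hkey t htIco]; exact hFv
    have h2 : v < h t * r := hFm.lt_iff_lt.1 h1
    have h3 : K * r < h t * r := by
      have : K * r ≤ |K| * r := mul_le_mul_of_nonneg_right (le_abs_self K) hr.le
      have hv2 : |K| * r < v := by rw [hv]; nlinarith [abs_nonneg K]
      linarith
    exact le_of_lt ((mul_lt_mul_iff_left₀ hr).1 h3)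
  -- ## Conjunct 4 : type I bound
  have hconj4 : ∃ C > (0 : ℝ), ∃ t₀ ∈ Ico (0 : ℝ) T',
      ∀ t ∈ Ico t₀ T', (h t) ^ (2 * k) ≤ C / (T' - t) := by
    refine ⟨C₀ / (c * (2 * k) * r ^ (2 * k)), by positivity, ?_⟩
    have hev : ∀ᶠ t in nhdsWithin T' (Iio T'), M' / r + 1 ≤ h t :=
      htend.eventually (eventually_ge_atTop _)
    have hev2 : Ioo (0:ℝ) T' ∈ nhdsWithin T' (Iio T') := Ioo_mem_nhdsLT hT'0
    obtain ⟨t₀, h1, h2⟩ := (hev.and (eventually_of_mem hev2 fun s hs => hs)).exists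
    refine ⟨t₀, ⟨h2.1.le, h2.2⟩, fun t ht => ?_⟩
    have htIco : t ∈ Ico (0:ℝ) T' := ⟨le_trans h2.1.le ht.1, ht.2⟩
    have hht : h t₀ ≤ h t := hmono.monotoneOn ⟨h2.1.le, h2.2⟩ htIco ht.1
    set x : ℝ := h t * r with hx
    have hxM' : M' ≤ x := by
      have : M' / r + 1 ≤ h t := le_trans h1 hht
      have h4 : (M' / r + 1) * r ≤ h t * r := mul_le_mul_of_nonneg_right this hr.le
      have h5 : (M' / r) * r = M' := div_mul_cancel₀ _ (ne_of_gt hr)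
      rw [hx]; nlinarith
    have hxr : r ≤ x := le_trans hM'r hxM'
    have hxpos : 0 < x := lt_of_lt_of_le hr hxr
    -- splitting the integral
    have hsplit : I = F x + ∫ ρ in Ioi x, φt ρ := by
      have hFxeq : F x = ∫ ρ in Ioc r x, φt ρ := intervalIntegral.integral_of_le hxr
      rw [hI, ← Ioc_union_Ioi_eq_Ioi hxr,
        setIntegral_union (Ioc_disjoint_Ioi le_rfl) measurableSet_Ioi
          hφtc.integrableOn_Ioc (hφtIoi.mono_set (Ioi_subset_Ioi hxr)), hFxeq]
    have htail : (∫ ρ in Ioi x, φt ρ) ≤ C₀ * (x ^ (2 * k))⁻¹ / (2 * k) := by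
      have hmono' : (∫ ρ in Ioi x, φt ρ) ≤ ∫ ρ in Ioi x, C₀ * (ρ ^ (2 * k + 1))⁻¹ := by
        refine setIntegral_mono_on (hφtIoi.mono_set (Ioi_subset_Ioi hxr))
          (hrpow_int.mono_set (Ioi_subset_Ioi hxM')) measurableSet_Ioi fun ρ hρ => ?_
        exact hbnd ρ (le_trans hxM' (le_of_lt hρ))
      have hval : (∫ ρ in Ioi x, C₀ * (ρ ^ (2 * k + 1))⁻¹) = C₀ * (x ^ (2 * k))⁻¹ / (2 * k) := by
        rw [integral_const_mul]
        have hcongr : (∫ ρ in Ioi x, (ρ ^ (2 * k + 1))⁻¹)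
            = ∫ ρ in Ioi x, ρ ^ (-(2 * (k:ℝ) + 1)) := by
          refine setIntegral_congr_fun measurableSet_Ioi fun ρ hρ => ?_
          have hρ0 : (0:ℝ) < ρ := lt_trans hxpos hρ
          rw [← Real.rpow_natCast ρ (2 * k + 1), ← Real.rpow_neg hρ0.le]
          congr 1
          push_cast
          ring
        rw [hcongr, integral_Ioi_rpow_of_lt (by linarith) hxpos]
        have hxpow : x ^ (-(2 * (k:ℝ) + 1) + 1) = (x ^ (2 * k))⁻¹ := by
          rw [← Real.rpow_natCast x (2 * k), ← Real.rpow_neg hxpos.le]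
          congr 1
          push_cast
          ring
        rw [hxpow]
        have h2k : (0:ℝ) < 2 * (k:ℝ) := by linarith
        field_simp
        try ring
      exact hval ▸ hmono'
    have hTt : T' - t = (1 / c) * ∫ ρ in Ioi x, φt ρ := by
      have hFx : F x = c * t := hkey t htIco
      rw [hT'eq, hsplit, hFx]
      field_simp
      ring
    have hTtpos : 0 < T' - t := sub_pos.2 ht.2
    have hhtpos : 0 < h t := hpos t htIco
    rw [le_div_iff₀ hTtpos]
    have hxk : x ^ (2 * k) = h t ^ (2 * k) * r ^ (2 * k) := mul_pow _ _ _
    have hbound2 : T' - t ≤ C₀ / (c * (2 * k) * r ^ (2 * k)) / (h t ^ (2 * k)) := by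
      rw [hTt]
      have h2k : (0:ℝ) < 2 * (k:ℝ) := by linarith
      have hc1 : (1:ℝ)/c * (C₀ * (x ^ (2 * k))⁻¹ / (2 * k))
          = C₀ / (c * (2 * k) * r ^ (2 * k)) / (h t ^ (2 * k)) := by
        rw [hxk]
        have : ((2:ℝ) * k) = ((2 * k : ℕ) : ℝ) := by push_cast; ring
        field_simp
        try simp
        try tauto
      rw [← hc1]
      exact mul_le_mul_of_nonneg_left htail (by positivity)
    calc h t ^ (2 * k) * (T' - t) ≤ h t ^ (2 * k) * (C₀ / (c * (2 * k) * r ^ (2 * k)) / (h t ^ (2 * k))) :=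
          mul_le_mul_of_nonneg_left hbound2 (by positivity)
      _ = C₀ / (c * (2 * k) * r ^ (2 * k)) := by
          rw [mul_comm, div_mul_cancel₀ _ (by positivity : h t ^ (2 * k) ≠ 0)]
  -- ## Assemble
  refine ⟨hmono, ?_, htend, hconj4, ?_⟩
  · rintro ⟨S, hS0, hSode⟩
    exact hmax S (T' + 1) (by linarith) hS0 fun t ht => hSode t ht.1
  · rw [hIeq, hT'eq]
    ring
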